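/- Suppose Γ¹ and Γ² are additive subgroups of V such that Γ¹ + Γ² = Γ and ⟨x, y⟩ = 0 for every x ∈ Γ¹ and y ∈ Γ². Then every basis vector e_j lies in Γ¹ ∪ Γ². -/

import Mathlib

open scoped RealInnerProductSpace

theorem stmt17
    {V : Type*} [NormedAddCommGroup V] [InnerProductSpace ℝ V] [FiniteDimensional ℝ V]
    {r : ℕ} (hr : 1 ≤ r) (hdim : Module.finrank ℝ V = r)
    (e : Fin r → V) (he0 : ∀ i, e i ≠ 0)
    (horth : ∀ i j, i ≠ j → ⟪e i, e j⟫ = 0)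
    (hspan : Submodule.span ℝ (Set.range e) = ⊤)
    (Γ Γ₁ Γ₂ : AddSubgroup V) (hΓ : Γ = AddSubgroup.closure (Set.range e))
    (hsum : Γ₁ ⊔ Γ₂ = Γ)
    (horth12 : ∀ x ∈ Γ₁, ∀ y ∈ Γ₂, ⟪x, y⟫ = 0) :
    ∀ j : Fin r, e j ∈ Γ₁ ∨ e j ∈ Γ₂ := by
  intro j
  have hcard : Fintype.card (Fin r) = Module.finrank ℝ V := by simp [hdim]
  set b : Module.Basis (Fin r) ℝ V := basisOfTopLeSpanOfCardEqFinrank e hspan.ge hcard with hbdef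
  have hb : ∀ i, b i = e i := fun i => congrFun (coe_basisOfTopLeSpanOfCardEqFinrank e hspan.ge hcard) i
  have hej : e j ∈ Γ₁ ⊔ Γ₂ := by
    rw [hsum, hΓ]; exact AddSubgroup.subset_closure ⟨j, rfl⟩
  obtain ⟨x, hx, y, hy, hxy⟩ := AddSubgroup.mem_sup.mp hej
  -- integer coordinates for elements of Γ
  have hint : ∀ z ∈ Γ, ∀ i, ∃ m : ℤ, b.repr z i = (m : ℝ) := by
    rw [hΓ]
    intro z hz
    induction hz using AddSubgroup.closure_induction with
    | mem w hw =>
      obtain ⟨k, rfl⟩ := hw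
      intro i
      rw [← hb k, b.repr_self]
      by_cases h : k = i
      · exact ⟨1, by simp [h]⟩
      · exact ⟨0, by simp [Finsupp.single_eq_of_ne (Ne.symm h)]⟩
    | zero => intro i; exact ⟨0, by simp⟩
    | add w₁ w₂ h₁ h₂ ih₁ ih₂ =>
      intro i
      obtain ⟨m₁, hm₁⟩ := ih₁ i
      obtain ⟨m₂, hm₂⟩ := ih₂ i
      exact ⟨m₁ + m₂, by simp [hm₁, hm₂]⟩
    | neg w h ih =>
      intro i
      obtain ⟨m, hm⟩ := ih i
      exact ⟨-m, by simp [hm]⟩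
  have hxΓ : x ∈ Γ := by rw [← hsum]; exact AddSubgroup.mem_sup_left hx
  -- repr of e j
  have hrepr_ej : ∀ i, b.repr (e j) i = if i = j then 1 else 0 := by
    intro i
    rw [← hb j, b.repr_self]
    by_cases h : i = j
    · simp [h]
    · rw [if_neg h]
      exact Finsupp.single_eq_of_ne fun hh => h hh
  have hy_eq : ∀ i, b.repr y i = b.repr (e j) i - b.repr x i := by
    intro i
    have : y = e j - x := by rw [← hxy]; abel
    rw [this]; simp
  -- inner product expansion
  have hx_sum : x = ∑ i, b.repr x i • e i := by
    conv_lhs => rw [← b.sum_repr x]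
    exact Finset.sum_congr rfl fun i _ => by rw [hb]
  have hy_sum : y = ∑ i, b.repr y i • e i := by
    conv_lhs => rw [← b.sum_repr y]
    exact Finset.sum_congr rfl fun i _ => by rw [hb]
  have hinner : ⟪x, y⟫ = ∑ i, b.repr x i * b.repr y i * ⟪e i, e i⟫ := by
    conv_lhs => rw [hx_sum, hy_sum]
    rw [sum_inner]
    refine Finset.sum_congr rfl fun i _ => ?_
    rw [real_inner_smul_left, inner_sum, Finset.sum_eq_single i]
    · rw [real_inner_smul_right]; ring
    · intro k _ hk
      rw [real_inner_smul_right, horth i k (Ne.symm hk), mul_zero]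
    · intro h; exact absurd (Finset.mem_univ i) h
  have hinner0 : ⟪x, y⟫ = 0 := horth12 x hx y hy
  -- each term is nonpositive
  have hterm : ∀ i ∈ Finset.univ, b.repr x i * b.repr y i * ⟪e i, e i⟫ ≤ 0 := by
    intro i _
    obtain ⟨m, hm⟩ := hint x hxΓ i
    have ha : (0:ℝ) < ⟪e i, e i⟫ := by rw [real_inner_self_eq_norm_sq]; exact pow_pos (norm_pos_iff.mpr (he0 i)) 2
    have hcd : b.repr x i * b.repr y i ≤ 0 := by
      rw [hy_eq, hrepr_ej, hm]
      by_cases h : i = j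
      · simp only [h, if_pos]
        have : (m : ℝ) * (1 - m) ≤ 0 := by
          rcases le_or_gt m 0 with h' | h'
          · have : (m:ℝ) ≤ 0 := by exact_mod_cast h'
            nlinarith
          · have : (1:ℝ) ≤ (m:ℝ) := by exact_mod_cast h'
            nlinarith
        simpa using this
      · simp only [if_neg h]
        nlinarith [sq_nonneg (m:ℝ)]
    exact mul_nonpos_of_nonpos_of_nonneg hcd ha.le
  have hall0 : ∀ i ∈ Finset.univ, b.repr x i * b.repr y i * ⟪e i, e i⟫ = 0 := by
    rw [← Finset.sum_eq_zero_iff_of_nonpos hterm, ← hinner, hinner0]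
  -- derive coordinates
  have hcoord : ∀ i, i ≠ j → b.repr x i = 0 := by
    intro i hij
    have h0 := hall0 i (Finset.mem_univ i)
    have ha : (0:ℝ) < ⟪e i, e i⟫ := by rw [real_inner_self_eq_norm_sq]; exact pow_pos (norm_pos_iff.mpr (he0 i)) 2
    rw [hy_eq, hrepr_ej, if_neg hij] at h0
    have : b.repr x i * (0 - b.repr x i) = 0 := by
      rcases mul_eq_zero.mp h0 with h | h
      · exact h
      · exact absurd h ha.ne'
    nlinarith [this]
  have hj0 := hall0 j (Finset.mem_univ j)
  have haj : (0:ℝ) < ⟪e j, e j⟫ := by rw [real_inner_self_eq_norm_sq]; exact pow_pos (norm_pos_iff.mpr (he0 j)) 2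
  rw [hy_eq, hrepr_ej, if_pos rfl] at hj0
  have hjcases : b.repr x j = 0 ∨ b.repr x j = 1 := by
    rcases mul_eq_zero.mp hj0 with h | h
    · rcases mul_eq_zero.mp h with h' | h'
      · exact Or.inl h'
      · exact Or.inr (by linarith)
    · exact absurd h haj.ne'
  rcases hjcases with h1 | h1
  · -- x = 0, so y = e j
    right
    have hx0 : x = 0 := by
      rw [hx_sum]
      refine Finset.sum_eq_zero fun i _ => ?_
      by_cases h : i = j
      · rw [h, h1, zero_smul]
      · rw [hcoord i h, zero_smul]
    have : y = e j := by rw [← hxy, hx0, zero_add]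
    rwa [← this]
  · -- x = e j
    left
    have : x = e j := by
      rw [hx_sum]
      rw [Finset.sum_eq_single j]
      · rw [h1, one_smul]
      · intro i _ hij; rw [hcoord i hij, zero_smul]
      · intro h; exact absurd (Finset.mem_univ j) h
    rwa [← this]
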